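/- arXiv:2209.10436 — 6 statements merged into one kernel-verified Lean document; each statement's English description precedes it below -/
import Mathlib

section
/- The polynomial identity -2·Δ_{xz}·Δ_{yz} + (z^2 + 2z - 1)·f(x,y,z) = (x y z^2 + x y z - i x z - i y z - z^2 + i x + i y - z)^2 holds in ℤ[i][x,y,z], where Δ_{xz} = x(1 - z^2) + i z(1 - x^2), Δ_{yz} = y(1 - z^2) + i z(1 - y^2), and f(x,y,z) = x^2 + y^2 + z^2 + x^2 y^2 z^2 - 4xyz. -/
/-- The identity `-2·Δ_{xz}·Δ_{yz} + (z²+2z-1)·f(x,y,z) = (xyz² + xyz - ixz - iyz - z² + ix + iy - z)²`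
where `Δ_{xz} = x(1-z²)+iz(1-x²)`, `Δ_{yz} = y(1-z²)+iz(1-y²)`, and
`f = x² + y² + z² + x²y²z² - 4xyz`, stated universally in any commutative ring
containing `i` with `i² = -1` (such as `ℤ[i][x,y,z]`). -/
theorem stmt_2 (R : Type*) [CommRing R] (i : R) (hi : i ^ 2 = -1) (x y z : R) :
    -2 * (x * (1 - z ^ 2) + i * z * (1 - x ^ 2)) * (y * (1 - z ^ 2) + i * z * (1 - y ^ 2)) +
      (z ^ 2 + 2 * z - 1) *
        (x ^ 2 + y ^ 2 + z ^ 2 + x ^ 2 * y ^ 2 * z ^ 2 - 4 * x * y * z) =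
      (x * y * z ^ 2 + x * y * z - i * x * z - i * y * z - z ^ 2 + i * x + i * y - z) ^ 2 := by
  linear_combination (-2*z^2 - y^2 + 2*y^2*z + y^2*z^2 - 2*x*y + 4*x*y*z - 2*x*y*z^2 - x^2 + 2*x^2*z + x^2*z^2 - 2*x^2*y^2*z^2) * hi
end

section
/- The only real solutions (x,y,z) ∈ ℝ^3 of x^2 + y^2 + z^2 + x^2 y^2 z^2 = 4xyz are (0,0,0), (1,1,1), (1,-1,-1), (-1,1,-1), and (-1,-1,1). -/
/-- The only real solutions of `x² + y² + z² + x²y²z² = 4xyz` are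
`(0,0,0)`, `(1,1,1)`, `(1,-1,-1)`, `(-1,1,-1)`, `(-1,-1,1)`. -/
theorem stmt_4 (x y z : ℝ) :
    x ^ 2 + y ^ 2 + z ^ 2 + x ^ 2 * y ^ 2 * z ^ 2 = 4 * x * y * z ↔
      (x, y, z) = (0, 0, 0) ∨ (x, y, z) = (1, 1, 1) ∨ (x, y, z) = (1, -1, -1) ∨
        (x, y, z) = (-1, 1, -1) ∨ (x, y, z) = (-1, -1, 1) := by
  constructor
  · intro h
    rcases le_or_gt 0 (y * z) with hyz | hyz
    · -- decomposition: (x(yz-1))² + (y-z)² + 2yz(x-1)² = 0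
      have h1 : (x * (y * z - 1)) ^ 2 + (y - z) ^ 2 + 2 * (y * z) * (x - 1) ^ 2 = 0 := by
        linear_combination h
      have t1 : (0:ℝ) ≤ (x * (y * z - 1)) ^ 2 := sq_nonneg _
      have t2 : (0:ℝ) ≤ (y - z) ^ 2 := sq_nonneg _
      have t3 : (0:ℝ) ≤ 2 * (y * z) * (x - 1) ^ 2 := by positivity
      have hyz0 : y = z := by
        have : (y - z) ^ 2 = 0 := by linarith
        have := pow_eq_zero_iff (n := 2) (by norm_num) |>.mp this
        linarith
      subst hyz0
      rcases eq_or_ne y 0 with hy | hy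
      · subst hy
        have hx : x = 0 := by nlinarith
        exact Or.inl (by simp [hx])
      · have hA : (x * (y * y - 1)) ^ 2 = 0 ∧ 2 * (y * y) * (x - 1) ^ 2 = 0 := by
          constructor <;> nlinarith
        have hx1 : x = 1 := by
          have h2 := hA.2
          have hy2 : y * y > 0 := by positivity
          have : (x - 1) ^ 2 = 0 := by
            rcases mul_eq_zero.mp h2 with h' | h'
            · exfalso; nlinarith
            · exact h'
          have := pow_eq_zero_iff (n := 2) (by norm_num) |>.mp this
          linarith
        subst hx1
        have hy1 : y * y = 1 := by
          have h2 := hA.1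
          have := pow_eq_zero_iff (n := 2) (by norm_num) |>.mp h2
          rcases mul_eq_zero.mp this with h' | h'
          · norm_num at h'
          · linarith
        have : y = 1 ∨ y = -1 := by
          rcases mul_self_eq_one_iff.mp hy1 with h' | h'
          · exact Or.inl h'
          · exact Or.inr h'
        rcases this with h' | h' <;> subst h'
        · exact Or.inr (Or.inl rfl)
        · exact Or.inr (Or.inr (Or.inl rfl))
    · -- yz < 0 : (x(yz+1))² + (y+z)² + (-2yz)(x+1)² = 0
      have h1 : (x * (y * z + 1)) ^ 2 + (y + z) ^ 2 + (-2 * (y * z)) * (x + 1) ^ 2 = 0 := by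
        linear_combination h
      have t1 : (0:ℝ) ≤ (x * (y * z + 1)) ^ 2 := sq_nonneg _
      have t2 : (0:ℝ) ≤ (y + z) ^ 2 := sq_nonneg _
      have hc : (0:ℝ) < -2 * (y * z) := by linarith
      have t3 : (0:ℝ) ≤ (-2 * (y * z)) * (x + 1) ^ 2 := by positivity
      have hx : x = -1 := by
        have hsq : (x + 1) ^ 2 = 0 := by nlinarith [sq_nonneg (x + 1)]
        have := pow_eq_zero_iff (n := 2) (by norm_num) |>.mp hsq
        linarith
      subst hx
      have hyz2 : y + z = 0 := by
        have : (y + z) ^ 2 = 0 := by nlinarith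
        have := pow_eq_zero_iff (n := 2) (by norm_num) |>.mp this
        linarith
      have hz : z = -y := by linarith
      subst hz
      have hA : ((-1 : ℝ) * (y * (-y) + 1)) ^ 2 = 0 := by nlinarith
      have hy1 : y * y = 1 := by
        have := pow_eq_zero_iff (n := 2) (by norm_num) |>.mp hA
        nlinarith
      rcases mul_self_eq_one_iff.mp hy1 with h' | h' <;> subst h'
      · exact Or.inr (Or.inr (Or.inr (Or.inl (by norm_num))))
      · exact Or.inr (Or.inr (Or.inr (Or.inr (by norm_num))))
  · rintro (h | h | h | h | h) <;>
      (injection h with h1 h2; injection h2 with h2 h3; subst h1; subst h2; subst h3; norm_num)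
end

section
/- Every affine real point of W_4 is a singular point of f(x,y,z) = x^2 + y^2 + z^2 + x^2 y^2 z^2 - 4xyz, i.e., if (x,y,z) ∈ ℝ^3 satisfies f(x,y,z) = 0 then all three partial derivatives of f vanish at (x,y,z). -/
/-- Every affine real point of `W₄` is a singular point of
`f = x² + y² + z² + x²y²z² - 4xyz`: if `f(x,y,z) = 0` over `ℝ` then all three
partial derivatives of `f` vanish at `(x,y,z)`. -/
theorem stmt_5 (x y z : ℝ)
    (hf : x ^ 2 + y ^ 2 + z ^ 2 + x ^ 2 * y ^ 2 * z ^ 2 - 4 * x * y * z = 0) :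
    2 * x + 2 * x * y ^ 2 * z ^ 2 - 4 * y * z = 0 ∧
      2 * y + 2 * x ^ 2 * y * z ^ 2 - 4 * x * z = 0 ∧
      2 * z + 2 * x ^ 2 * y ^ 2 * z - 4 * x * y = 0 := by
  have key : ((1+z)*(x-y))^2 + (z*(1+z)*(1-x*y))^2 + ((1-z)*(x+y))^2
      + (z*(1-z)*(1+x*y))^2 = 0 := by linear_combination (2*(1+z^2)) * hf
  have e1 : (1+z)*(x-y) = 0 := by
    have h : ((1+z)*(x-y))^2 = 0 := by
      nlinarith [sq_nonneg (z*(1+z)*(1-x*y)), sq_nonneg ((1-z)*(x+y)), sq_nonneg (z*(1-z)*(1+x*y))]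
    exact (pow_eq_zero_iff two_ne_zero).mp h
  have e2 : z*(1+z)*(1-x*y) = 0 := by
    have h : (z*(1+z)*(1-x*y))^2 = 0 := by
      nlinarith [sq_nonneg ((1+z)*(x-y)), sq_nonneg ((1-z)*(x+y)), sq_nonneg (z*(1-z)*(1+x*y))]
    exact (pow_eq_zero_iff two_ne_zero).mp h
  have e3 : (1-z)*(x+y) = 0 := by
    have h : ((1-z)*(x+y))^2 = 0 := by
      nlinarith [sq_nonneg ((1+z)*(x-y)), sq_nonneg (z*(1+z)*(1-x*y)), sq_nonneg (z*(1-z)*(1+x*y))]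
    exact (pow_eq_zero_iff two_ne_zero).mp h
  have e4 : z*(1-z)*(1+x*y) = 0 := by
    have h : (z*(1-z)*(1+x*y))^2 = 0 := by
      nlinarith [sq_nonneg ((1+z)*(x-y)), sq_nonneg (z*(1+z)*(1-x*y)), sq_nonneg ((1-z)*(x+y))]
    exact (pow_eq_zero_iff two_ne_zero).mp h
  rcases eq_or_ne z 0 with hz | hz
  · subst hz
    have hxy : x - y = 0 := by
      rcases mul_eq_zero.mp e1 with h | h
      · linarith
      · exact h
    have hxy' : x + y = 0 := by
      rcases mul_eq_zero.mp e3 with h | h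
      · linarith
      · exact h
    have hx : x = 0 := by linarith
    have hy : y = 0 := by linarith
    refine ⟨?_, ?_, ?_⟩ <;> simp [hx, hy]
  · have e2' : (1+z)*(1-x*y) = 0 := by
      rw [mul_assoc] at e2
      rcases mul_eq_zero.mp e2 with h' | h'
      · exact absurd h' hz
      · exact h'
    have e4' : (1-z)*(1+x*y) = 0 := by
      rw [mul_assoc] at e4
      rcases mul_eq_zero.mp e4 with h' | h'
      · exact absurd h' hz
      · exact h'
    rcases mul_eq_zero.mp e2' with hz1 | hxy1
    · -- z = -1
      have hzv : z = -1 := by linarith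
      rcases mul_eq_zero.mp e4' with hz2 | hxy2
      · linarith
      · have hxy : x * y = -1 := by linarith
        have hyx : x + y = 0 := by
          rcases mul_eq_zero.mp e3 with h | h
          · linarith
          · exact h
        have hy : y = -x := by linarith
        subst hzv; subst hy
        have hx2 : x ^ 2 = 1 := by linear_combination -hxy
        refine ⟨?_, ?_, ?_⟩
        · linear_combination 2*x*hx2
        · linear_combination (-2*x)*hx2
        · linear_combination (-2*x^2+2)*hx2
    · have hxy : x * y = 1 := by linarith
      rcases mul_eq_zero.mp e4' with hz2 | hxy2
      · have hzv : z = 1 := by linarith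
        have hyx : x - y = 0 := by
          rcases mul_eq_zero.mp e1 with h | h
          · linarith
          · exact h
        have hy : y = x := by linarith
        subst hzv; subst hy
        have hx2 : y ^ 2 = 1 := by linear_combination hxy
        refine ⟨?_, ?_, ?_⟩
        · linear_combination 2*y*hx2
        · linear_combination 2*y*hx2
        · linear_combination (2*y^2-2)*hx2
      · linarith
end

section
/- Let F be a field of characteristic ≠ 2 and let (x,y,z) ∈ F^3 satisfy f(x,y,z) = 0, where f = x^2 + y^2 + z^2 + x^2 y^2 z^2 - 4xyz. If the three discriminants Δ_x = 16y^2z^2 - 4(1+y^2z^2)(y^2+z^2), Δ_y = 16x^2z^2 - 4(1+x^2z^2)(x^2+z^2), Δ_z = 16x^2y^2 - 4(1+x^2y^2)(x^2+y^2) all vanish at (x,y,z), then (x,y,z) is one of (0,0,0), (1,1,1), (1,-1,-1), (-1,1,-1), (-1,-1,1). -/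
/-- If `(x,y,z)` lies on `f = x²+y²+z²+x²y²z²-4xyz = 0` over a field of
characteristic `≠ 2` and the three discriminants `Δ_x, Δ_y, Δ_z` all vanish there,
then `(x,y,z)` is one of the five affine singular points. -/
theorem stmt_10 (F : Type*) [Field F] (h2 : (2 : F) ≠ 0) (x y z : F)
    (hf : x ^ 2 + y ^ 2 + z ^ 2 + x ^ 2 * y ^ 2 * z ^ 2 - 4 * x * y * z = 0)
    (hx : 16 * y ^ 2 * z ^ 2 - 4 * (1 + y ^ 2 * z ^ 2) * (y ^ 2 + z ^ 2) = 0)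
    (hy : 16 * x ^ 2 * z ^ 2 - 4 * (1 + x ^ 2 * z ^ 2) * (x ^ 2 + z ^ 2) = 0)
    (hz : 16 * x ^ 2 * y ^ 2 - 4 * (1 + x ^ 2 * y ^ 2) * (x ^ 2 + y ^ 2) = 0) :
    (x, y, z) = (0, 0, 0) ∨ (x, y, z) = (1, 1, 1) ∨ (x, y, z) = (1, -1, -1) ∨
      (x, y, z) = (-1, 1, -1) ∨ (x, y, z) = (-1, -1, 1) := by
  have h4 : (4 : F) ≠ 0 := by
    intro h
    have h22 : (2 : F) * 2 = 0 := by linear_combination h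
    rcases mul_eq_zero.mp h22 with h' | h' <;> exact h2 h'
  -- cancel the factor 4 in the discriminant equations
  have hx' : 4 * y ^ 2 * z ^ 2 - (1 + y ^ 2 * z ^ 2) * (y ^ 2 + z ^ 2) = 0 := by
    have h : (4 : F) * (4 * y ^ 2 * z ^ 2 - (1 + y ^ 2 * z ^ 2) * (y ^ 2 + z ^ 2)) = 4 * 0 := by
      linear_combination hx
    exact mul_left_cancel₀ h4 h
  have hy' : 4 * x ^ 2 * z ^ 2 - (1 + x ^ 2 * z ^ 2) * (x ^ 2 + z ^ 2) = 0 := by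
    have h : (4 : F) * (4 * x ^ 2 * z ^ 2 - (1 + x ^ 2 * z ^ 2) * (x ^ 2 + z ^ 2)) = 4 * 0 := by
      linear_combination hy
    exact mul_left_cancel₀ h4 h
  have hz' : 4 * x ^ 2 * y ^ 2 - (1 + x ^ 2 * y ^ 2) * (x ^ 2 + y ^ 2) = 0 := by
    have h : (4 : F) * (4 * x ^ 2 * y ^ 2 - (1 + x ^ 2 * y ^ 2) * (x ^ 2 + y ^ 2)) = 4 * 0 := by
      linear_combination hz
    exact mul_left_cancel₀ h4 h
  -- double root relations
  have ea : (1 + y ^ 2 * z ^ 2) * x = 2 * (y * z) := by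
    have h : ((1 + y ^ 2 * z ^ 2) * x - 2 * (y * z)) ^ 2 = 0 := by
      linear_combination (1 + y ^ 2 * z ^ 2) * hf + hx'
    exact sub_eq_zero.mp (sq_eq_zero_iff.mp h)
  have eb : (1 + x ^ 2 * z ^ 2) * y = 2 * (x * z) := by
    have h : ((1 + x ^ 2 * z ^ 2) * y - 2 * (x * z)) ^ 2 = 0 := by
      linear_combination (1 + x ^ 2 * z ^ 2) * hf + hy'
    exact sub_eq_zero.mp (sq_eq_zero_iff.mp h)
  have ec : (1 + x ^ 2 * y ^ 2) * z = 2 * (x * y) := by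
    have h : ((1 + x ^ 2 * y ^ 2) * z - 2 * (x * y)) ^ 2 = 0 := by
      linear_combination (1 + x ^ 2 * y ^ 2) * hf + hz'
    exact sub_eq_zero.mp (sq_eq_zero_iff.mp h)
  -- the coefficient 1 + y²z² is nonzero
  have hA : (1 + y ^ 2 * z ^ 2) ≠ 0 := by
    intro h
    have hyz : 2 * (y * z) = 0 := by rw [← ea, h, zero_mul]
    have hyz0 : y * z = 0 := by
      rcases mul_eq_zero.mp hyz with h' | h'
      · exact absurd h' h2
      · exact h'
    apply one_ne_zero (α := F)
    calc (1 : F) = 1 + y ^ 2 * z ^ 2 - (y * z) ^ 2 := by ring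
      _ = 0 := by rw [h, hyz0]; ring
  -- squared relation
  have sa : (1 + y ^ 2 * z ^ 2) * x ^ 2 = y ^ 2 + z ^ 2 := by
    have h : (1 + y ^ 2 * z ^ 2) * ((1 + y ^ 2 * z ^ 2) * x ^ 2) =
        (1 + y ^ 2 * z ^ 2) * (y ^ 2 + z ^ 2) := by
      linear_combination ((1 + y ^ 2 * z ^ 2) * x + 2 * (y * z)) * ea + hx'
    exact mul_left_cancel₀ hA h
  by_cases hx0 : x = 0
  · -- the origin
    subst hx0
    have hs : y ^ 2 + z ^ 2 = 0 := by
      rw [← sa]; ring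
    have hyz : y * z = 0 := by
      have h : 2 * (y * z) = 0 := by rw [← ea]; ring
      rcases mul_eq_zero.mp h with h' | h'
      · exact absurd h' h2
      · exact h'
    left
    rcases mul_eq_zero.mp hyz with h' | h'
    · subst h'
      have : z ^ 2 = 0 := by linear_combination hs
      have hz0 : z = 0 := by exact pow_eq_zero_iff (by norm_num) |>.mp this
      simp [hz0]
    · subst h'
      have : y ^ 2 = 0 := by linear_combination hs
      have hy0 : y = 0 := by exact pow_eq_zero_iff (by norm_num) |>.mp this
      simp [hy0]
  · -- all nonzero case
    have hB : (1 + x ^ 2 * z ^ 2) ≠ 0 := by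
      intro h
      have hxz : 2 * (x * z) = 0 := by rw [← eb, h, zero_mul]
      have hxz0 : x * z = 0 := by
        rcases mul_eq_zero.mp hxz with h' | h'
        · exact absurd h' h2
        · exact h'
      apply one_ne_zero (α := F)
      calc (1 : F) = 1 + x ^ 2 * z ^ 2 - (x * z) ^ 2 := by ring
        _ = 0 := by rw [h, hxz0]; ring
    have hC : (1 + x ^ 2 * y ^ 2) ≠ 0 := by
      intro h
      have hxy : 2 * (x * y) = 0 := by rw [← ec, h, zero_mul]
      have hxy0 : x * y = 0 := by
        rcases mul_eq_zero.mp hxy with h' | h'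
        · exact absurd h' h2
        · exact h'
      apply one_ne_zero (α := F)
      calc (1 : F) = 1 + x ^ 2 * y ^ 2 - (x * y) ^ 2 := by ring
        _ = 0 := by rw [h, hxy0]; ring
    have sb : (1 + x ^ 2 * z ^ 2) * y ^ 2 = x ^ 2 + z ^ 2 := by
      have h : (1 + x ^ 2 * z ^ 2) * ((1 + x ^ 2 * z ^ 2) * y ^ 2) =
          (1 + x ^ 2 * z ^ 2) * (x ^ 2 + z ^ 2) := by
        linear_combination ((1 + x ^ 2 * z ^ 2) * y + 2 * (x * z)) * eb + hy'
      exact mul_left_cancel₀ hB h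
    have sc : (1 + x ^ 2 * y ^ 2) * z ^ 2 = x ^ 2 + y ^ 2 := by
      have h : (1 + x ^ 2 * y ^ 2) * ((1 + x ^ 2 * y ^ 2) * z ^ 2) =
          (1 + x ^ 2 * y ^ 2) * (x ^ 2 + y ^ 2) := by
        linear_combination ((1 + x ^ 2 * y ^ 2) * z + 2 * (x * y)) * ec + hz'
      exact mul_left_cancel₀ hC h
    have r1 : 2 * x * (y * z) = y ^ 2 + z ^ 2 := by linear_combination sa - x * ea
    have r2 : 2 * y * (x * z) = x ^ 2 + z ^ 2 := by linear_combination sb - y * eb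
    have r3 : 2 * z * (x * y) = x ^ 2 + y ^ 2 := by linear_combination sc - z * ec
    have hyx : y ^ 2 = x ^ 2 := by linear_combination r2 - r1
    have hzx : z ^ 2 = x ^ 2 := by linear_combination r3 - r1
    -- yz = x
    have hyzx : y * z = x := by
      have h : 2 * x * (y * z - x) = 0 := by linear_combination r1 + hyx + hzx
      have h2x : 2 * x ≠ 0 := mul_ne_zero h2 hx0
      have := mul_eq_zero.mp h
      rcases this with h' | h'
      · exact absurd h' h2x
      · exact sub_eq_zero.mp h'
    -- x² = 1
    have hx2 : x ^ 2 = 1 := by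
      have h : x * (x ^ 2 - 1) = 0 := by
        linear_combination ea - (x * (y * z + x) - 2) * hyzx
      rcases mul_eq_zero.mp h with h' | h'
      · exact absurd h' hx0
      · exact sub_eq_zero.mp h'
    have hy2 : y ^ 2 = 1 := by rw [hyx]; exact hx2
    have hz2 : z ^ 2 = 1 := by rw [hzx]; exact hx2
    have hzxy : z = x * y := by linear_combination y * hyzx - z * hy2
    have hx1 : x = 1 ∨ x = -1 := by
      have h : (x - 1) * (x + 1) = 0 := by linear_combination hx2
      rcases mul_eq_zero.mp h with h' | h'
      · left; exact sub_eq_zero.mp h'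
      · right; exact eq_neg_of_add_eq_zero_left h'
    have hy1 : y = 1 ∨ y = -1 := by
      have h : (y - 1) * (y + 1) = 0 := by linear_combination hy2
      rcases mul_eq_zero.mp h with h' | h'
      · left; exact sub_eq_zero.mp h'
      · right; exact eq_neg_of_add_eq_zero_left h'
    subst hzxy
    rcases hx1 with rfl | rfl <;> rcases hy1 with rfl | rfl
    · right; left; norm_num
    · right; right; left; norm_num
    · right; right; right; left; norm_num
    · right; right; right; right; norm_num
end

section
/- Let F be a field of characteristic ≠ 2 containing i with i^2 = -1, and suppose F contains a square root of 2 (equivalently, F contains a primitive 8th root of unity). Let (x,y,z) ∈ F^3 with f(x,y,z) = 0 and z^2 + 2z - 1 ≠ 0 relevantly; then Δ_{xz}(x,z) · Δ_{yz}(y,z) = -(1/2)·(x y z^2 + x y z - i x z - i y z - z^2 + i x + i y - z)^2, where Δ_{uz}(u,z) = u(1-z^2)+iz(1-u^2). In particular Δ_{xz}·Δ_{yz} is -1/2 times a square in F, hence (since -2 is a square in F) Δ_{xz} and Δ_{yz} differ multiplicatively by a square whenever both are nonzero. -/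
/-- Over a field of characteristic `≠ 2` containing `i` with `i² = -1` and a square
root `s` of `2`, if `f(x,y,z) = 0` then
`Δ_{xz}·Δ_{yz} = -(1/2)·(xyz² + xyz - ixz - iyz - z² + ix + iy - z)²`;
in particular `Δ_{xz}·Δ_{yz}` is `-1/2` times a square, and since `-2` is a square
in `F`, whenever `Δ_{xz}` and `Δ_{yz}` are both nonzero they differ multiplicatively
by a square. -/
theorem stmt_11 (F : Type*) [Field F] (h2 : (2 : F) ≠ 0) (i s : F)
    (hi : i ^ 2 = -1) (hs : s ^ 2 = 2) (x y z : F)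
    (hf : x ^ 2 + y ^ 2 + z ^ 2 + x ^ 2 * y ^ 2 * z ^ 2 - 4 * x * y * z = 0) :
    (x * (1 - z ^ 2) + i * z * (1 - x ^ 2)) * (y * (1 - z ^ 2) + i * z * (1 - y ^ 2)) =
      -(1 / 2) *
        (x * y * z ^ 2 + x * y * z - i * x * z - i * y * z - z ^ 2 + i * x + i * y - z) ^ 2 ∧
      (x * (1 - z ^ 2) + i * z * (1 - x ^ 2) ≠ 0 →
        y * (1 - z ^ 2) + i * z * (1 - y ^ 2) ≠ 0 →
        ∃ u : F, u ≠ 0 ∧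
          x * (1 - z ^ 2) + i * z * (1 - x ^ 2) =
            u ^ 2 * (y * (1 - z ^ 2) + i * z * (1 - y ^ 2))) := by
  set Dx := x * (1 - z ^ 2) + i * z * (1 - x ^ 2) with hDx
  set Dy := y * (1 - z ^ 2) + i * z * (1 - y ^ 2) with hDy
  set Q := x * y * z ^ 2 + x * y * z - i * x * z - i * y * z - z ^ 2 + i * x + i * y - z with hQ
  have key2 : 2 * (Dx * Dy) = -Q ^ 2 := by
    rw [hDx, hDy, hQ]
    linear_combination (-1 + 2*z + z^2) * hf +
      (2*z^2 + y^2 - 2*y^2*z - y^2*z^2 + 2*x*y - 4*x*y*z + 2*x*y*z^2 + x^2 - 2*x^2*z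
        - x^2*z^2 + 2*x^2*y^2*z^2) * hi
  have key : Dx * Dy = -(1 / 2) * Q ^ 2 := by
    rw [show -(1 / 2 : F) * Q ^ 2 = -Q ^ 2 / 2 by ring, eq_div_iff h2]
    linear_combination key2
  refine ⟨key, fun hx hy => ?_⟩
  have hi0 : i ≠ 0 := fun h => h2 (by rw [h] at hi; linear_combination 2 * hi)
  have hs0 : s ≠ 0 := fun h => h2 (by rw [h] at hs; linear_combination -hs)
  have hQ0 : Q ≠ 0 := by
    intro h
    rw [h] at key2
    exact mul_ne_zero h2 (mul_ne_zero hx hy) (by linear_combination key2)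
  refine ⟨s * i * Dx / Q, div_ne_zero (mul_ne_zero (mul_ne_zero hs0 hi0) hx) hQ0, ?_⟩
  have h3 : Dx * Q ^ 2 = (s * i * Dx) ^ 2 * Dy := by
    linear_combination (-(i^2 * Dx^2 * Dy)) * hs + (-(2 * Dx^2 * Dy)) * hi + Dx * key2
  rw [div_pow, div_mul_eq_mul_div, eq_div_iff (pow_ne_zero 2 hQ0)]
  linear_combination h3
end

section
/- Let F be a field of characteristic ≠ 2 containing a primitive 8th root of unity, and let (x,y,z) ∈ F^3 be a nonsingular point of W_4 (f(x,y,z) = 0 but (x,y,z) not among the five singular affine points). Then at least one of the six quantities Δ_{uv} (u ≠ v ∈ {x,y,z}), where Δ_{uv} = u(1-v^2)+iv(1-u^2), is nonzero, and all nonzero ones lie in the same square class of F^×: any two nonzero Δ_{uv}, Δ_{u'v'} satisfy Δ_{uv}·Δ_{u'v'} ∈ (F^×)^2. -/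
set_option maxHeartbeats 3200000 in
/-- Let `F` be a field of characteristic `≠ 2` containing a primitive 8th root of
unity (equivalently, elements `i, s` with `i² = -1`, `s² = 2`), and let `(x,y,z)` be
a nonsingular affine point of `W₄`. Then at least one of the six quantities
`Δ_{uv} = u(1-v²)+iv(1-u²)` (`u ≠ v ∈ {x,y,z}`) is nonzero, and any two nonzero ones
lie in the same square class: their product is a nonzero square of `F`. -/
theorem stmt_17 (F : Type*) [Field F] (h2 : (2 : F) ≠ 0) (i s : F)
    (hi : i ^ 2 = -1) (hs : s ^ 2 = 2) (x y z : F)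
    (hf : x ^ 2 + y ^ 2 + z ^ 2 + x ^ 2 * y ^ 2 * z ^ 2 - 4 * x * y * z = 0)
    (hns : (x, y, z) ∉ ({(0, 0, 0), (1, 1, 1), (1, -1, -1), (-1, 1, -1), (-1, -1, 1)} :
      Set (F × F × F))) :
    (∃ d ∈ [x * (1 - y ^ 2) + i * y * (1 - x ^ 2), x * (1 - z ^ 2) + i * z * (1 - x ^ 2),
        y * (1 - x ^ 2) + i * x * (1 - y ^ 2), y * (1 - z ^ 2) + i * z * (1 - y ^ 2),
        z * (1 - x ^ 2) + i * x * (1 - z ^ 2), z * (1 - y ^ 2) + i * y * (1 - z ^ 2)],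
      d ≠ 0) ∧
    ∀ a ∈ [x * (1 - y ^ 2) + i * y * (1 - x ^ 2), x * (1 - z ^ 2) + i * z * (1 - x ^ 2),
        y * (1 - x ^ 2) + i * x * (1 - y ^ 2), y * (1 - z ^ 2) + i * z * (1 - y ^ 2),
        z * (1 - x ^ 2) + i * x * (1 - z ^ 2), z * (1 - y ^ 2) + i * y * (1 - z ^ 2)],
      ∀ b ∈ [x * (1 - y ^ 2) + i * y * (1 - x ^ 2), x * (1 - z ^ 2) + i * z * (1 - x ^ 2),
        y * (1 - x ^ 2) + i * x * (1 - y ^ 2), y * (1 - z ^ 2) + i * z * (1 - y ^ 2),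
        z * (1 - x ^ 2) + i * x * (1 - z ^ 2), z * (1 - y ^ 2) + i * y * (1 - z ^ 2)],
      a ≠ 0 → b ≠ 0 → ∃ u : F, u ≠ 0 ∧ a * b = u ^ 2 := by
  constructor
  · by_contra hcon
    push_neg at hcon
    have h0 : x * (1 - y ^ 2) + i * y * (1 - x ^ 2) = 0 := hcon _ (by simp)
    have h1 : x * (1 - z ^ 2) + i * z * (1 - x ^ 2) = 0 := hcon _ (by simp)
    have h2' : y * (1 - x ^ 2) + i * x * (1 - y ^ 2) = 0 := hcon _ (by simp)
    have h3 : y * (1 - z ^ 2) + i * z * (1 - y ^ 2) = 0 := hcon _ (by simp)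
    have h4 : z * (1 - x ^ 2) + i * x * (1 - z ^ 2) = 0 := hcon _ (by simp)
    have h5 : z * (1 - y ^ 2) + i * y * (1 - z ^ 2) = 0 := hcon _ (by simp)
    have hAxy : x * (1 - y ^ 2) = 0 :=
      (mul_eq_zero.mp (show (2:F) * (x * (1 - y ^ 2)) = 0 by
        linear_combination h0 - i * h2' + (x * (1 - y ^ 2)) * hi)).resolve_left h2
    have hBxy : y * (1 - x ^ 2) = 0 :=
      (mul_eq_zero.mp (show (2:F) * (y * (1 - x ^ 2)) = 0 by
        linear_combination (-i) * h0 + h2' + (y * (1 - x ^ 2)) * hi)).resolve_left h2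
    have hAxz : x * (1 - z ^ 2) = 0 :=
      (mul_eq_zero.mp (show (2:F) * (x * (1 - z ^ 2)) = 0 by
        linear_combination h1 - i * h4 + (x * (1 - z ^ 2)) * hi)).resolve_left h2
    have hByz : z * (1 - y ^ 2) = 0 :=
      (mul_eq_zero.mp (show (2:F) * (z * (1 - y ^ 2)) = 0 by
        linear_combination (-i) * h3 + h5 + (z * (1 - y ^ 2)) * hi)).resolve_left h2
    by_cases hx : x = 0
    · have hy : y = 0 := by
        have := hBxy; rw [hx] at this; simpa using this
      have hz : z = 0 := by
        have := hByz; rw [hy] at this; simpa using this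
      exact hns (by rw [hx, hy, hz]; simp)
    · have hy2 : y ^ 2 = 1 := by
        rcases mul_eq_zero.mp hAxy with h | h
        · exact absurd h hx
        · linear_combination -h
      have hz2 : z ^ 2 = 1 := by
        rcases mul_eq_zero.mp hAxz with h | h
        · exact absurd h hx
        · linear_combination -h
      have hy0 : y ≠ 0 := fun h => by rw [h] at hy2; norm_num at hy2
      have hx2 : x ^ 2 = 1 := by
        rcases mul_eq_zero.mp hBxy with h | h
        · exact absurd h hy0
        · linear_combination -h
      have hxyz : x * y * z = 1 := by
        have h' : (2:F) * (2 * (x * y * z - 1)) = 0 := by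
          linear_combination (-1) * hf + (1 + y^2*z^2) * hx2 + (1 + z^2) * hy2 + 2 * hz2
        have h'' := ((mul_eq_zero.mp h').resolve_left h2)
        have h''' := ((mul_eq_zero.mp h'').resolve_left h2)
        linear_combination h'''
      have hz' : z = x * y := by
        linear_combination (-z) * hxyz + (x*y) * hz2
      rcases mul_eq_zero.mp (show (x - 1) * (x + 1) = 0 by linear_combination hx2) with h | h
      · have hx1 : x = 1 := by linear_combination h
        rcases mul_eq_zero.mp (show (y - 1) * (y + 1) = 0 by linear_combination hy2) with h' | h'
        · have hy1 : y = 1 := by linear_combination h'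
          have hz1 : z = 1 := by rw [hx1, hy1] at hz'; simpa using hz'
          exact hns (by rw [hx1, hy1, hz1]; simp)
        · have hy1 : y = -1 := by linear_combination h'
          have hz1 : z = -1 := by rw [hx1, hy1] at hz'; simpa using hz'
          exact hns (by rw [hx1, hy1, hz1]; simp)
      · have hx1 : x = -1 := by linear_combination h
        rcases mul_eq_zero.mp (show (y - 1) * (y + 1) = 0 by linear_combination hy2) with h' | h'
        · have hy1 : y = 1 := by linear_combination h'
          have hz1 : z = -1 := by rw [hx1, hy1] at hz'; simpa using hz'
          exact hns (by rw [hx1, hy1, hz1]; simp)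
        · have hy1 : y = -1 := by linear_combination h'
          have hz1 : z = 1 := by rw [hx1, hy1] at hz'; simpa using hz'
          exact hns (by rw [hx1, hy1, hz1]; simp)
  · -- square-class part
    have h4 : (4 : F) ≠ 0 := by
      rw [show (4 : F) = 2 * 2 by norm_num]; exact mul_ne_zero h2 h2
    have key : ∀ u v W : F, 4 * (u * v) = W ^ 2 → u ≠ 0 → v ≠ 0 →
        ∃ t : F, t ≠ 0 ∧ u * v = t ^ 2 := by
      intro u v W h hu hv
      have hW : W ≠ 0 := by
        rintro rfl
        exact mul_ne_zero hu hv
          ((mul_eq_zero.mp (by simpa using h)).resolve_left h4)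
      refine ⟨W / 2, div_ne_zero hW h2, ?_⟩
      rw [div_pow, eq_div_iff (by rw [show (2:F)^2 = 4 by norm_num]; exact h4)]
      linear_combination h
    have h01 : 4 * ((x * (1 - y ^ 2) + i * y * (1 - x ^ 2)) * (x * (1 - z ^ 2) + i * z * (1 - x ^ 2))) = ((i*s*x*y + i*s*x*z - i*s*y - i*s*z + s*x^2*y*z - s*x^2 + s*x*y*z - s*x)) ^ 2 := by
      linear_combination ((-2*x^2 - 4*x + 2)) * hf + ((4*x^4*y*z - 2*x^2*y^2 - 12*x^2*y*z - 2*x^2*z^2 + 4*x*y^2 + 8*x*y*z + 4*x*z^2 - 2*y^2 - 2*z^2)) * hi + ((-i^2*x^2*y^2 - 2*i^2*x^2*y*z - i^2*x^2*z^2 + 2*i^2*x*y^2 + 4*i^2*x*y*z + 2*i^2*x*z^2 - i^2*y^2 - 2*i^2*y*z - i^2*z^2 - 2*i*x^3*y^2*z - 2*i*x^3*y*z^2 + 2*i*x^3*y + 2*i*x^3*z + 2*i*x*y^2*z + 2*i*x*y*z^2 - 2*i*x*y - 2*i*x*z - x^4*y^2*z^2 + 2*x^4*y*z - x^4 - 2*x^3*y^2*z^2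 + 4*x^3*y*z - 2*x^3 - x^2*y^2*z^2 + 2*x^2*y*z - x^2)) * hs
    have h10 : 4 * ((x * (1 - z ^ 2) + i * z * (1 - x ^ 2)) * (x * (1 - y ^ 2) + i * y * (1 - x ^ 2))) = ((i*s*x*y + i*s*x*z - i*s*y - i*s*z + s*x^2*y*z - s*x^2 + s*x*y*z - s*x)) ^ 2 := by
      linear_combination h01
    have h02 : 4 * ((x * (1 - y ^ 2) + i * y * (1 - x ^ 2)) * (y * (1 - x ^ 2) + i * x * (1 - y ^ 2))) = ((-i*s*x^2*y^2*z + 2*i*s*x*y - i*s*z + s*x^2*y^2*z - 2*s*x*y + s*z)) ^ 2 := by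
      linear_combination ((4*i*x^2*y^2 + 4*i)) * hf + ((-2*x^4*y^4*z^2 + 8*x^3*y^3*z + 4*x^3*y^3 - 4*x^3*y - 4*x^2*y^2*z^2 - 8*x^2*y^2 - 4*x*y^3 + 8*x*y*z + 4*x*y - 2*z^2)) * hi + ((-i^2*x^4*y^4*z^2 + 4*i^2*x^3*y^3*z - 2*i^2*x^2*y^2*z^2 - 4*i^2*x^2*y^2 + 4*i^2*x*y*z - i^2*z^2 + 2*i*x^4*y^4*z^2 - 8*i*x^3*y^3*z + 4*i*x^2*y^2*z^2 + 8*i*x^2*y^2 - 8*i*x*y*z + 2*i*z^2 - x^4*y^4*z^2 + 4*x^3*y^3*z - 2*x^2*y^2*z^2 - 4*x^2*y^2 + 4*x*y*z - z^2)) * hs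
    have h20 : 4 * ((y * (1 - x ^ 2) + i * x * (1 - y ^ 2)) * (x * (1 - y ^ 2) + i * y * (1 - x ^ 2))) = ((-i*s*x^2*y^2*z + 2*i*s*x*y - i*s*z + s*x^2*y^2*z - 2*s*x*y + s*z)) ^ 2 := by
      linear_combination h02
    have h03 : 4 * ((x * (1 - y ^ 2) + i * y * (1 - x ^ 2)) * (y * (1 - z ^ 2) + i * z * (1 - y ^ 2))) = ((-i*x*y^2*z + i*x*y*z - i*x*y - i*x - i*y^2 + i*y*z + i*y + i*z - x*y^2*z + x*y*z + x*y + x - y^2 - y*z + y - z)) ^ 2 := by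
      linear_combination ((-2*i*y^2 + 4*i*y + 2*i)) * hf + ((-x^2*y^4*z^2 + 2*x^2*y^3*z^2 + 2*x^2*y^3*z - x^2*y^2*z^2 - x^2*y^2 - 2*x^2*y*z - 2*x^2*y - x^2 - 2*x*y^4*z + 2*x*y^3*z^2 + 4*x*y^3*z - 2*x*y^3 - 2*x*y*z^2 + 4*x*y*z + 2*x*y + 2*x*z - y^4 - 2*y^3*z + 2*y^3 - y^2*z^2 - y^2 - 2*y*z^2 + 2*y*z - z^2)) * hi + (0) * hs
    have h30 : 4 * ((y * (1 - z ^ 2) + i * z * (1 - y ^ 2)) * (x * (1 - y ^ 2) + i * y * (1 - x ^ 2))) = ((-i*x*y^2*z + i*x*y*z - i*x*y - i*x - i*y^2 + i*y*z + i*y + i*z - x*y^2*z + x*y*z + x*y + x - y^2 - y*z + y - z)) ^ 2 := by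
      linear_combination h03
    have h04 : 4 * ((x * (1 - y ^ 2) + i * y * (1 - x ^ 2)) * (z * (1 - x ^ 2) + i * x * (1 - z ^ 2))) = ((-i*x^2*y*z - i*x^2 + i*x*y*z + i*x*y - i*x*z + i*x + i*y - i*z - x^2*y*z - x^2 + x*y*z - x*y + x*z + x - y + z)) ^ 2 := by
      linear_combination ((-2*i*x^2 + 4*i*x + 2*i)) * hf + ((-x^4*y^2*z^2 - 2*x^4*y*z - x^4 + 2*x^3*y^2*z^2 + 2*x^3*y^2*z + 2*x^3*y*z^2 + 4*x^3*y*z - 2*x^3*y - 2*x^3*z + 2*x^3 - x^2*y^2*z^2 - x^2*y^2 - x^2*z^2 - x^2 - 2*x*y^2*z - 2*x*y^2 - 2*x*y*z^2 + 4*x*y*z + 2*x*y - 2*x*z^2 + 2*x*z - y^2 + 2*y*z - z^2)) * hi + (0) * hs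
    have h40 : 4 * ((z * (1 - x ^ 2) + i * x * (1 - z ^ 2)) * (x * (1 - y ^ 2) + i * y * (1 - x ^ 2))) = ((-i*x^2*y*z - i*x^2 + i*x*y*z + i*x*y - i*x*z + i*x + i*y - i*z - x^2*y*z - x^2 + x*y*z - x*y + x*z + x - y + z)) ^ 2 := by
      linear_combination h04
    have h05 : 4 * ((x * (1 - y ^ 2) + i * y * (1 - x ^ 2)) * (z * (1 - y ^ 2) + i * y * (1 - z ^ 2))) = ((i*s*x*y^2*z + i*s*x*y*z - i*s*y^2 - i*s*y + s*x*y - s*x + s*y*z - s*z)) ^ 2 := by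
      linear_combination ((2*y^2 + 4*y - 2)) * hf + ((-2*x^2*y^4*z^2 - 4*x^2*y^3*z^2 + 2*x^2*y^2*z^2 - 4*x^2*y^2 + 4*x*y^4*z + 8*x*y^3*z + 4*x*y^2*z - 2*y^4 - 4*y^3 - 4*y^2*z^2 + 2*y^2)) * hi + ((-i^2*x^2*y^4*z^2 - 2*i^2*x^2*y^3*z^2 - i^2*x^2*y^2*z^2 + 2*i^2*x*y^4*z + 4*i^2*x*y^3*z + 2*i^2*x*y^2*z - i^2*y^4 - 2*i^2*y^3 - i^2*y^2 - 2*i*x^2*y^3*z + 2*i*x^2*y*z - 2*i*x*y^3*z^2 + 2*i*x*y^3 + 2*i*x*y*z^2 - 2*i*x*y + 2*i*y^3*z - 2*i*y*z - x^2*y^2 + 2*x^2*y - x^2 - 2*x*y^2*z + 4*x*y*z - 2*x*z - y^2*z^2 + 2*y*z^2 - z^2)) * hs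
    have h50 : 4 * ((z * (1 - y ^ 2) + i * y * (1 - z ^ 2)) * (x * (1 - y ^ 2) + i * y * (1 - x ^ 2))) = ((i*s*x*y^2*z + i*s*x*y*z - i*s*y^2 - i*s*y + s*x*y - s*x + s*y*z - s*z)) ^ 2 := by
      linear_combination h05
    have h12 : 4 * ((x * (1 - z ^ 2) + i * z * (1 - x ^ 2)) * (y * (1 - x ^ 2) + i * x * (1 - y ^ 2))) = ((-i*x^2*y*z - i*x^2 + i*x*y*z - i*x*y + i*x*z + i*x - i*y + i*z - x^2*y*z - x^2 + x*y*z + x*y - x*z + x + y - z)) ^ 2 := by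
      linear_combination ((-2*i*x^2 + 4*i*x + 2*i)) * hf + ((-x^4*y^2*z^2 - 2*x^4*y*z - x^4 + 2*x^3*y^2*z^2 + 2*x^3*y^2*z + 2*x^3*y*z^2 + 4*x^3*y*z - 2*x^3*y - 2*x^3*z + 2*x^3 - x^2*y^2*z^2 - x^2*y^2 - x^2*z^2 - x^2 - 2*x*y^2*z - 2*x*y^2 - 2*x*y*z^2 + 4*x*y*z + 2*x*y - 2*x*z^2 + 2*x*z - y^2 + 2*y*z - z^2)) * hi + (0) * hs
    have h21 : 4 * ((y * (1 - x ^ 2) + i * x * (1 - y ^ 2)) * (x * (1 - z ^ 2) + i * z * (1 - x ^ 2))) = ((-i*x^2*y*z - i*x^2 + i*x*y*z - i*x*y + i*x*z + i*x - i*y + i*z - x^2*y*z - x^2 + x*y*z + x*y - x*z + x + y - z)) ^ 2 := by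
      linear_combination h12
    have h13 : 4 * ((x * (1 - z ^ 2) + i * z * (1 - x ^ 2)) * (y * (1 - z ^ 2) + i * z * (1 - y ^ 2))) = ((i*s*x*y*z^2 + i*s*x*y*z - i*s*z^2 - i*s*z + s*x*z - s*x + s*y*z - s*y)) ^ 2 := by
      linear_combination ((2*z^2 + 4*z - 2)) * hf + ((-2*x^2*y^2*z^4 - 4*x^2*y^2*z^3 + 2*x^2*y^2*z^2 - 4*x^2*z^2 + 4*x*y*z^4 + 8*x*y*z^3 + 4*x*y*z^2 - 4*y^2*z^2 - 2*z^4 - 4*z^3 + 2*z^2)) * hi + ((-i^2*x^2*y^2*z^4 - 2*i^2*x^2*y^2*z^3 - i^2*x^2*y^2*z^2 + 2*i^2*x*y*z^4 + 4*i^2*x*y*z^3 + 2*i^2*x*y*z^2 - i^2*z^4 - 2*i^2*z^3 - i^2*z^2 - 2*i*x^2*y*z^3 + 2*i*x^2*y*z - 2*i*x*y^2*z^3 + 2*i*x*y^2*z + 2*i*x*z^3 - 2*i*x*z + 2*i*y*z^3 - 2*i*y*z - x^2*z^2 + 2*x^2*z - x^2 - 2*x*y*z^2 + 4*x*y*z -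 2*x*y - y^2*z^2 + 2*y^2*z - y^2)) * hs
    have h31 : 4 * ((y * (1 - z ^ 2) + i * z * (1 - y ^ 2)) * (x * (1 - z ^ 2) + i * z * (1 - x ^ 2))) = ((i*s*x*y*z^2 + i*s*x*y*z - i*s*z^2 - i*s*z + s*x*z - s*x + s*y*z - s*y)) ^ 2 := by
      linear_combination h13
    have h14 : 4 * ((x * (1 - z ^ 2) + i * z * (1 - x ^ 2)) * (z * (1 - x ^ 2) + i * x * (1 - z ^ 2))) = ((-i*s*x^2*y*z^2 + 2*i*s*x*z - i*s*y + s*x^2*y*z^2 - 2*s*x*z + s*y)) ^ 2 := by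
      linear_combination ((4*i*x^2*z^2 + 4*i)) * hf + ((-2*x^4*y^2*z^4 + 8*x^3*y*z^3 + 4*x^3*z^3 - 4*x^3*z - 4*x^2*y^2*z^2 - 8*x^2*z^2 + 8*x*y*z - 4*x*z^3 + 4*x*z - 2*y^2)) * hi + ((-i^2*x^4*y^2*z^4 + 4*i^2*x^3*y*z^3 - 2*i^2*x^2*y^2*z^2 - 4*i^2*x^2*z^2 + 4*i^2*x*y*z - i^2*y^2 + 2*i*x^4*y^2*z^4 - 8*i*x^3*y*z^3 + 4*i*x^2*y^2*z^2 + 8*i*x^2*z^2 - 8*i*x*y*z + 2*i*y^2 - x^4*y^2*z^4 + 4*x^3*y*z^3 - 2*x^2*y^2*z^2 - 4*x^2*z^2 + 4*x*y*z - y^2)) * hs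
    have h41 : 4 * ((z * (1 - x ^ 2) + i * x * (1 - z ^ 2)) * (x * (1 - z ^ 2) + i * z * (1 - x ^ 2))) = ((-i*s*x^2*y*z^2 + 2*i*s*x*z - i*s*y + s*x^2*y*z^2 - 2*s*x*z + s*y)) ^ 2 := by
      linear_combination h14
    have h15 : 4 * ((x * (1 - z ^ 2) + i * z * (1 - x ^ 2)) * (z * (1 - y ^ 2) + i * y * (1 - z ^ 2))) = ((-i*x*y*z^2 + i*x*y*z - i*x*z - i*x + i*y*z + i*y - i*z^2 + i*z - x*y*z^2 + x*y*z + x*z + x - y*z - y - z^2 + z)) ^ 2 := by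
      linear_combination ((-2*i*z^2 + 4*i*z + 2*i)) * hf + ((-x^2*y^2*z^4 + 2*x^2*y^2*z^3 - x^2*y^2*z^2 + 2*x^2*y*z^3 - 2*x^2*y*z - x^2*z^2 - 2*x^2*z - x^2 + 2*x*y^2*z^3 - 2*x*y^2*z - 2*x*y*z^4 + 4*x*y*z^3 + 4*x*y*z + 2*x*y - 2*x*z^3 + 2*x*z - y^2*z^2 - 2*y^2*z - y^2 - 2*y*z^3 + 2*y*z - z^4 + 2*z^3 - z^2)) * hi + (0) * hs
    have h51 : 4 * ((z * (1 - y ^ 2) + i * y * (1 - z ^ 2)) * (x * (1 - z ^ 2) + i * z * (1 - x ^ 2))) = ((-i*x*y*z^2 + i*x*y*z - i*x*z - i*x + i*y*z + i*y - i*z^2 + i*z - x*y*z^2 + x*y*z + x*z + x - y*z - y - z^2 + z)) ^ 2 := by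
      linear_combination h15
    have h23 : 4 * ((y * (1 - x ^ 2) + i * x * (1 - y ^ 2)) * (y * (1 - z ^ 2) + i * z * (1 - y ^ 2))) = ((i*s*x*y - i*s*x + i*s*y*z - i*s*z + s*x*y^2*z + s*x*y*z - s*y^2 - s*y)) ^ 2 := by
      linear_combination ((-2*y^2 - 4*y + 2)) * hf + ((-2*x^2*y^2 + 4*x^2*y - 2*x^2 + 4*x*y^4*z - 12*x*y^2*z + 8*x*y*z - 2*y^2*z^2 + 4*y*z^2 - 2*z^2)) * hi + ((-i^2*x^2*y^2 + 2*i^2*x^2*y - i^2*x^2 - 2*i^2*x*y^2*z + 4*i^2*x*y*z - 2*i^2*x*z - i^2*y^2*z^2 + 2*i^2*y*z^2 - i^2*z^2 - 2*i*x^2*y^3*z + 2*i*x^2*y*z - 2*i*x*y^3*z^2 + 2*i*x*y^3 + 2*i*x*y*z^2 - 2*i*x*y + 2*i*y^3*z - 2*i*y*z - x^2*y^4*z^2 - 2*x^2*y^3*z^2 - x^2*y^2*z^2 + 2*x*y^4*z + 4*x*y^3*z + 2*x*y^2*z - y^4 - 2*y^3 - y^2)) * hs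
    have h32 : 4 * ((y * (1 - z ^ 2) + i * z * (1 - y ^ 2)) * (y * (1 - x ^ 2) + i * x * (1 - y ^ 2))) = ((i*s*x*y - i*s*x + i*s*y*z - i*s*z + s*x*y^2*z + s*x*y*z - s*y^2 - s*y)) ^ 2 := by
      linear_combination h23
    have h24 : 4 * ((y * (1 - x ^ 2) + i * x * (1 - y ^ 2)) * (z * (1 - x ^ 2) + i * x * (1 - z ^ 2))) = ((i*s*x^2*y*z - i*s*x^2 + i*s*x*y*z - i*s*x + s*x*y + s*x*z - s*y - s*z)) ^ 2 := by
      linear_combination ((2*x^2 + 4*x - 2)) * hf + ((-2*x^4*y^2*z^2 + 4*x^4*y*z - 2*x^4 - 4*x^3*y^2*z^2 + 8*x^3*y*z - 4*x^3 + 2*x^2*y^2*z^2 - 4*x^2*y^2 + 4*x^2*y*z - 4*x^2*z^2 + 2*x^2)) * hi + ((-i^2*x^4*y^2*z^2 + 2*i^2*x^4*y*z - i^2*x^4 - 2*i^2*x^3*y^2*z^2 + 4*i^2*x^3*y*z - 2*i^2*x^3 - i^2*x^2*y^2*z^2 + 2*i^2*x^2*y*z - i^2*x^2 - 2*i*x^3*y^2*z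 - 2*i*x^3*y*z^2 + 2*i*x^3*y + 2*i*x^3*z + 2*i*x*y^2*z + 2*i*x*y*z^2 - 2*i*x*y - 2*i*x*z - x^2*y^2 - 2*x^2*y*z - x^2*z^2 + 2*x*y^2 + 4*x*y*z + 2*x*z^2 - y^2 - 2*y*z - z^2)) * hs
    have h42 : 4 * ((z * (1 - x ^ 2) + i * x * (1 - z ^ 2)) * (y * (1 - x ^ 2) + i * x * (1 - y ^ 2))) = ((i*s*x^2*y*z - i*s*x^2 + i*s*x*y*z - i*s*x + s*x*y + s*x*z - s*y - s*z)) ^ 2 := by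
      linear_combination h24
    have h25 : 4 * ((y * (1 - x ^ 2) + i * x * (1 - y ^ 2)) * (z * (1 - y ^ 2) + i * y * (1 - z ^ 2))) = ((-i*x*y^2*z + i*x*y*z + i*x*y + i*x - i*y^2 - i*y*z + i*y - i*z - x*y^2*z + x*y*z - x*y - x - y^2 + y*z + y + z)) ^ 2 := by
      linear_combination ((-2*i*y^2 + 4*i*y + 2*i)) * hf + ((-x^2*y^4*z^2 + 2*x^2*y^3*z^2 + 2*x^2*y^3*z - x^2*y^2*z^2 - x^2*y^2 - 2*x^2*y*z - 2*x^2*y - x^2 - 2*x*y^4*z + 2*x*y^3*z^2 + 4*x*y^3*z - 2*x*y^3 - 2*x*y*z^2 + 4*x*y*z + 2*x*y + 2*x*z - y^4 - 2*y^3*z + 2*y^3 - y^2*z^2 - y^2 - 2*y*z^2 + 2*y*z - z^2)) * hi + (0) * hs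
    have h52 : 4 * ((z * (1 - y ^ 2) + i * y * (1 - z ^ 2)) * (y * (1 - x ^ 2) + i * x * (1 - y ^ 2))) = ((-i*x*y^2*z + i*x*y*z + i*x*y + i*x - i*y^2 - i*y*z + i*y - i*z - x*y^2*z + x*y*z - x*y - x - y^2 + y*z + y + z)) ^ 2 := by
      linear_combination h25
    have h34 : 4 * ((y * (1 - z ^ 2) + i * z * (1 - y ^ 2)) * (z * (1 - x ^ 2) + i * x * (1 - z ^ 2))) = ((-i*x*y*z^2 + i*x*y*z + i*x*z + i*x - i*y*z - i*y - i*z^2 + i*z - x*y*z^2 + x*y*z - x*z - x + y*z + y - z^2 + z)) ^ 2 := by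
      linear_combination ((-2*i*z^2 + 4*i*z + 2*i)) * hf + ((-x^2*y^2*z^4 + 2*x^2*y^2*z^3 - x^2*y^2*z^2 + 2*x^2*y*z^3 - 2*x^2*y*z - x^2*z^2 - 2*x^2*z - x^2 + 2*x*y^2*z^3 - 2*x*y^2*z - 2*x*y*z^4 + 4*x*y*z^3 + 4*x*y*z + 2*x*y - 2*x*z^3 + 2*x*z - y^2*z^2 - 2*y^2*z - y^2 - 2*y*z^3 + 2*y*z - z^4 + 2*z^3 - z^2)) * hi + (0) * hs
    have h43 : 4 * ((z * (1 - x ^ 2) + i * x * (1 - z ^ 2)) * (y * (1 - z ^ 2) + i * z * (1 - y ^ 2))) = ((-i*x*y*z^2 + i*x*y*z + i*x*z + i*x - i*y*z - i*y - i*z^2 + i*z - x*y*z^2 + x*y*z - x*z - x + y*z + y - z^2 + z)) ^ 2 := by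
      linear_combination h34
    have h35 : 4 * ((y * (1 - z ^ 2) + i * z * (1 - y ^ 2)) * (z * (1 - y ^ 2) + i * y * (1 - z ^ 2))) = ((-i*s*x*y^2*z^2 - i*s*x + 2*i*s*y*z + s*x*y^2*z^2 + s*x - 2*s*y*z)) ^ 2 := by
      linear_combination ((4*i*y^2*z^2 + 4*i)) * hf + ((-2*x^2*y^4*z^4 - 4*x^2*y^2*z^2 - 2*x^2 + 8*x*y^3*z^3 + 8*x*y*z + 4*y^3*z^3 - 4*y^3*z - 8*y^2*z^2 - 4*y*z^3 + 4*y*z)) * hi + ((-i^2*x^2*y^4*z^4 - 2*i^2*x^2*y^2*z^2 - i^2*x^2 + 4*i^2*x*y^3*z^3 + 4*i^2*x*y*z - 4*i^2*y^2*z^2 + 2*i*x^2*y^4*z^4 + 4*i*x^2*y^2*z^2 + 2*i*x^2 - 8*i*x*y^3*z^3 - 8*i*x*y*z + 8*i*y^2*z^2 - x^2*y^4*z^4 - 2*x^2*y^2*z^2 - x^2 + 4*x*y^3*z^3 + 4*x*y*z - 4*y^2*z^2)) * hs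
    have h53 : 4 * ((z * (1 - y ^ 2) + i * y * (1 - z ^ 2)) * (y * (1 - z ^ 2) + i * z * (1 - y ^ 2))) = ((-i*s*x*y^2*z^2 - i*s*x + 2*i*s*y*z + s*x*y^2*z^2 + s*x - 2*s*y*z)) ^ 2 := by
      linear_combination h35
    have h45 : 4 * ((z * (1 - x ^ 2) + i * x * (1 - z ^ 2)) * (z * (1 - y ^ 2) + i * y * (1 - z ^ 2))) = ((i*s*x*z - i*s*x + i*s*y*z - i*s*y + s*x*y*z^2 + s*x*y*z - s*z^2 - s*z)) ^ 2 := by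
      linear_combination ((-2*z^2 - 4*z + 2)) * hf + ((-2*x^2*z^2 + 4*x^2*z - 2*x^2 + 4*x*y*z^4 - 12*x*y*z^2 + 8*x*y*z - 2*y^2*z^2 + 4*y^2*z - 2*y^2)) * hi + ((-i^2*x^2*z^2 + 2*i^2*x^2*z - i^2*x^2 - 2*i^2*x*y*z^2 + 4*i^2*x*y*z - 2*i^2*x*y - i^2*y^2*z^2 + 2*i^2*y^2*z - i^2*y^2 - 2*i*x^2*y*z^3 + 2*i*x^2*y*z - 2*i*x*y^2*z^3 + 2*i*x*y^2*z + 2*i*x*z^3 - 2*i*x*z + 2*i*y*z^3 - 2*i*y*z - x^2*y^2*z^4 - 2*x^2*y^2*z^3 - x^2*y^2*z^2 + 2*x*y*z^4 + 4*x*y*z^3 + 2*x*y*z^2 - z^4 - 2*z^3 - z^2)) * hs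
    have h54 : 4 * ((z * (1 - y ^ 2) + i * y * (1 - z ^ 2)) * (z * (1 - x ^ 2) + i * x * (1 - z ^ 2))) = ((i*s*x*z - i*s*x + i*s*y*z - i*s*y + s*x*y*z^2 + s*x*y*z - s*z^2 - s*z)) ^ 2 := by
      linear_combination h45
    intro a ha b hb
    simp only [List.mem_cons, List.not_mem_nil, or_false] at ha hb
    rcases ha with rfl | rfl | rfl | rfl | rfl | rfl <;>
      rcases hb with rfl | rfl | rfl | rfl | rfl | rfl
    · exact fun hA hB => ⟨_, hA, (pow_two _).symm⟩
    · exact fun hA hB => key _ _ _ h01 hA hB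
    · exact fun hA hB => key _ _ _ h02 hA hB
    · exact fun hA hB => key _ _ _ h03 hA hB
    · exact fun hA hB => key _ _ _ h04 hA hB
    · exact fun hA hB => key _ _ _ h05 hA hB
    · exact fun hA hB => key _ _ _ h10 hA hB
    · exact fun hA hB => ⟨_, hA, (pow_two _).symm⟩
    · exact fun hA hB => key _ _ _ h12 hA hB
    · exact fun hA hB => key _ _ _ h13 hA hB
    · exact fun hA hB => key _ _ _ h14 hA hB
    · exact fun hA hB => key _ _ _ h15 hA hB
    · exact fun hA hB => key _ _ _ h20 hA hB
    · exact fun hA hB => key _ _ _ h21 hA hB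
    · exact fun hA hB => ⟨_, hA, (pow_two _).symm⟩
    · exact fun hA hB => key _ _ _ h23 hA hB
    · exact fun hA hB => key _ _ _ h24 hA hB
    · exact fun hA hB => key _ _ _ h25 hA hB
    · exact fun hA hB => key _ _ _ h30 hA hB
    · exact fun hA hB => key _ _ _ h31 hA hB
    · exact fun hA hB => key _ _ _ h32 hA hB
    · exact fun hA hB => ⟨_, hA, (pow_two _).symm⟩
    · exact fun hA hB => key _ _ _ h34 hA hB
    · exact fun hA hB => key _ _ _ h35 hA hB
    · exact fun hA hB => key _ _ _ h40 hA hB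
    · exact fun hA hB => key _ _ _ h41 hA hB
    · exact fun hA hB => key _ _ _ h42 hA hB
    · exact fun hA hB => key _ _ _ h43 hA hB
    · exact fun hA hB => ⟨_, hA, (pow_two _).symm⟩
    · exact fun hA hB => key _ _ _ h45 hA hB
    · exact fun hA hB => key _ _ _ h50 hA hB
    · exact fun hA hB => key _ _ _ h51 hA hB
    · exact fun hA hB => key _ _ _ h52 hA hB
    · exact fun hA hB => key _ _ _ h53 hA hB
    · exact fun hA hB => key _ _ _ h54 hA hB
    · exact fun hA hB => ⟨_, hA, (pow_two _).symm⟩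
end
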